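/- For all real r, ρ > 0 with r ≠ ρ, the integral ∫₀^{2π} (ρ·cos θ + r)/(ρ² + 2ρr·cos θ + r²) dθ equals 2π/r if r > ρ, and equals 0 if ρ > r. Equivalently, it equals π(sgn(r² − ρ²) + 1)/r. -/

import Mathlib

open Real MeasureTheory Metric Complex

lemma key (r ρ : ℝ) (hr : 0 < r) (hρ : 0 < ρ) (hne : r ≠ ρ) :
    (∫ θ in (0:ℝ)..(2*π),
        (ρ * Real.cos θ + r) / (ρ^2 + 2*ρ*r*Real.cos θ + r^2))
    = if ρ < r then 2*π/r else 0 := by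
  have hrne : (r:ℂ) ≠ 0 := by exact_mod_cast hr.ne'
  set f : ℝ → ℂ := fun θ => ((r:ℂ) + circleMap 0 ρ θ)⁻¹ with hf
  have hz : ∀ θ : ℝ, ((r:ℂ) + circleMap 0 ρ θ) ≠ 0 := by
    intro θ h
    have h2 : circleMap 0 ρ θ = -(r:ℂ) := by linear_combination h
    have := norm_circleMap_zero ρ θ
    rw [h2] at this
    simp [abs_of_pos hρ, abs_of_pos hr] at this
    exact hne this
  have hcont : Continuous f :=
    (continuous_const.add (continuous_circleMap 0 ρ)).inv₀ hz
  have hre : ∀ θ : ℝ, (f θ).re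
      = (ρ * Real.cos θ + r) / (ρ^2 + 2*ρ*r*Real.cos θ + r^2) := by
    intro θ
    rw [hf]
    simp only [Complex.inv_re]
    have h1 : ((r:ℂ) + circleMap 0 ρ θ).re = ρ * Real.cos θ + r := by
      simp [circleMap, Complex.exp_ofReal_mul_I_re]
      ring
    have h2 : Complex.normSq ((r:ℂ) + circleMap 0 ρ θ)
        = ρ^2 + 2*ρ*r*Real.cos θ + r^2 := by
      simp [Complex.normSq_apply, circleMap, Complex.exp_ofReal_mul_I_re,
        Complex.exp_ofReal_mul_I_im]
      linear_combination (ρ:ℝ)^2 * (Real.sin_sq_add_cos_sq θ)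
    rw [h1, h2]
  have step1 : (∫ θ in (0:ℝ)..(2*π),
        (ρ * Real.cos θ + r) / (ρ^2 + 2*ρ*r*Real.cos θ + r^2))
      = (∫ θ in (0:ℝ)..(2*π), f θ).re := by
    have h := Complex.reCLM.intervalIntegral_comp_comm
      (μ := MeasureTheory.volume) (hcont.intervalIntegrable 0 (2*π))
    simp only [Complex.reCLM_apply] at h
    rw [← h]
    exact intervalIntegral.integral_congr fun θ _ => (hre θ).symm
  have step2 : (∫ θ in (0:ℝ)..(2*π), f θ)
      = ∮ z in C(0, ρ), (Complex.I * z)⁻¹ * ((r:ℂ) + z)⁻¹ := by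
    rw [circleIntegral]
    refine intervalIntegral.integral_congr fun θ _ => ?_
    have hz0 : circleMap 0 ρ θ ≠ 0 := circleMap_ne_center hρ.ne'
    have hIz : circleMap 0 ρ θ * Complex.I ≠ 0 := by
      simp [hz0, Complex.I_ne_zero]
    rw [deriv_circleMap, smul_eq_mul, hf]
    rw [show (Complex.I * circleMap 0 ρ θ)⁻¹ = (circleMap 0 ρ θ * Complex.I)⁻¹
      by rw [mul_comm]]
    rw [← mul_assoc, mul_inv_cancel₀ hIz, one_mul]
  have hmem : ∀ z ∈ sphere (0:ℂ) ρ, ‖z‖ = ρ := by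
    intro z hz'
    simpa using hz'
  have step3 : (∮ z in C(0, ρ), (Complex.I * z)⁻¹ * ((r:ℂ) + z)⁻¹)
      = (Complex.I * r)⁻¹ * ((∮ z in C(0, ρ), (z - 0)⁻¹)
          - (∮ z in C(0, ρ), (z - (-(r:ℂ)))⁻¹)) := by
    have heq : Set.EqOn (fun z : ℂ => (Complex.I * z)⁻¹ * ((r:ℂ) + z)⁻¹)
        (fun z : ℂ => (Complex.I * r)⁻¹ * ((z - 0)⁻¹ - (z - (-(r:ℂ)))⁻¹))
        (sphere 0 ρ) := by
      intro z hz'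
      have haz : ‖z‖ = ρ := hmem z hz'
      have hz0 : z ≠ 0 := by
        intro h; rw [h] at haz; simp at haz; exact hρ.ne haz
      have hzr : z + r ≠ 0 := by
        intro h
        have h2 : z = -(r:ℂ) := by linear_combination h
        rw [h2] at haz
        simp [abs_of_pos hr] at haz
        exact hne haz
      simp only [sub_zero, sub_neg_eq_add]
      rw [inv_sub_inv hz0 hzr, show (z + (r:ℂ) - z) = (r:ℂ) by ring]
      have hD : Complex.I * (r:ℂ) * z + Complex.I * z^2 ≠ 0 := by
        rw [show Complex.I * (r:ℂ) * z + Complex.I * z^2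
            = Complex.I * z * (z + (r:ℂ)) by ring]
        exact mul_ne_zero (mul_ne_zero Complex.I_ne_zero hz0) hzr
      field_simp
      rw [div_eq_iff (by
        rw [add_comm]
        exact hzr)]
      ring
    rw [circleIntegral.integral_congr hρ.le heq]
    have hi0 : CircleIntegrable (fun z : ℂ => (z - 0)⁻¹) 0 ρ := by
      rw [circleIntegrable_sub_inv_iff]
      right
      rw [abs_of_pos hρ]
      intro h
      have := hmem _ h
      simp at this
      exact hρ.ne this
    have hir : CircleIntegrable (fun z : ℂ => (z - (-(r:ℂ)))⁻¹) 0 ρ := by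
      rw [circleIntegrable_sub_inv_iff]
      right
      rw [abs_of_pos hρ]
      intro h
      have := hmem _ h
      simp [abs_of_pos hr] at this
      exact hne this
    rw [circleIntegral.integral_const_mul]
    congr 1
    exact circleIntegral.integral_sub hi0 hir
  have h0val : (∮ z in C(0, ρ), (z - (0:ℂ))⁻¹) = 2 * π * Complex.I :=
    circleIntegral.integral_sub_inv_of_mem_ball (by simpa using hρ)
  by_cases hlt : ρ < r
  · have hrval : (∮ z in C(0, ρ), (z - (-(r:ℂ)))⁻¹) = 0 := by
      apply circleIntegral_eq_zero_of_differentiable_on_off_countable hρ.le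
        Set.countable_empty
      · apply ContinuousOn.inv₀ (by fun_prop)
        intro z hz' h
        have hz2 : z = -(r:ℂ) := by linear_combination h
        have hle : ‖z‖ ≤ ρ := by simpa using hz'
        rw [hz2] at hle
        simp [abs_of_pos hr] at hle
        exact absurd hle (not_le.mpr hlt)
      · intro z hz'
        apply DifferentiableAt.inv (by fun_prop)
        intro h
        have hz2 : z = -(r:ℂ) := by linear_combination h
        have hlt2 : ‖z‖ < ρ := by simpa using hz'.1
        rw [hz2] at hlt2
        simp [abs_of_pos hr] at hlt2
        exact absurd hlt2 (not_lt.mpr hlt.le)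
    rw [if_pos hlt, step1, step2, step3, h0val, hrval]
    have hval : (Complex.I * r)⁻¹ * (2 * π * Complex.I - 0)
        = ((2*π/r : ℝ) : ℂ) := by
      push_cast
      field_simp
      ring
    rw [hval]
    simp
  · have hlt' : r < ρ := lt_of_le_of_ne (not_lt.mp hlt) hne
    have hrval : (∮ z in C(0, ρ), (z - (-(r:ℂ)))⁻¹) = 2 * π * Complex.I := by
      apply circleIntegral.integral_sub_inv_of_mem_ball
      simp only [mem_ball, dist_zero_right, norm_neg]
      simpa [abs_of_pos hr] using hlt'
    rw [if_neg hlt, step1, step2, step3, h0val, hrval]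
    simp


open Real MeasureTheory in
/-- Evaluation of the angular integral ∫₀^{2π} (ρ cos θ + r)/(ρ² + 2ρr cos θ + r²) dθ. -/
theorem stmt2 (r ρ : ℝ) (hr : 0 < r) (hρ : 0 < ρ) (hne : r ≠ ρ) :
    ((r > ρ →
        (∫ θ in (0:ℝ)..(2*π),
          (ρ * Real.cos θ + r) / (ρ^2 + 2*ρ*r*Real.cos θ + r^2)) = 2*π/r) ∧
     (ρ > r →
        (∫ θ in (0:ℝ)..(2*π),
          (ρ * Real.cos θ + r) / (ρ^2 + 2*ρ*r*Real.cos θ + r^2)) = 0)) ∧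
    (∫ θ in (0:ℝ)..(2*π),
        (ρ * Real.cos θ + r) / (ρ^2 + 2*ρ*r*Real.cos θ + r^2))
      = π * (Real.sign (r^2 - ρ^2) + 1) / r := by
  have h := key r ρ hr hρ hne
  by_cases hlt : ρ < r
  · rw [if_pos hlt] at h
    have hs : Real.sign (r^2 - ρ^2) = 1 :=
      Real.sign_of_pos (by nlinarith)
    refine ⟨⟨fun _ => h, fun h2 => absurd hlt (not_lt.mpr h2.le)⟩, ?_⟩
    rw [h, hs]; ring
  · have hlt' : r < ρ := lt_of_le_of_ne (not_lt.mp hlt) hne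
    rw [if_neg hlt] at h
    have hs : Real.sign (r^2 - ρ^2) = -1 :=
      Real.sign_of_neg (by nlinarith)
    refine ⟨⟨fun h2 => absurd h2 hlt, fun _ => h⟩, ?_⟩
    rw [h, hs]; ring
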